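/- arXiv:1804.03752 — 2 statements merged into one kernel-verified Lean document; each statement's English description precedes it below -/
import Mathlib

section
/- If G is a triangle-free graph with n vertices and at least one edge, then √(s⁺) ≤ n/2, where s⁺ is the sum of squares of the positive adjacency eigenvalues. -/
open Finset Matrix

section Aux

variable {V : Type*} [Fintype V] [DecidableEq V]

open Matrix

/-- Powers via the spectral theorem (real case). -/
lemma aux_pow_spectral {A : Matrix V V ℝ} (hA : A.IsHermitian) (k : ℕ) :
    A ^ k = (hA.eigenvectorUnitary : Matrix V V ℝ) * (Matrix.diagonal hA.eigenvalues) ^ k *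
      star (hA.eigenvectorUnitary : Matrix V V ℝ) := by
  have hU : (hA.eigenvectorUnitary : Matrix V V ℝ) * star (hA.eigenvectorUnitary : Matrix V V ℝ)
      = 1 := Matrix.mem_unitaryGroup_iff.mp (hA.eigenvectorUnitary).2
  have hU' : star (hA.eigenvectorUnitary : Matrix V V ℝ) *
      (hA.eigenvectorUnitary : Matrix V V ℝ) = 1 :=
    Matrix.mem_unitaryGroup_iff'.mp (hA.eigenvectorUnitary).2
  have hspec : A = (hA.eigenvectorUnitary : Matrix V V ℝ) * Matrix.diagonal hA.eigenvalues *
      star (hA.eigenvectorUnitary : Matrix V V ℝ) := by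
    have := hA.spectral_theorem
    rwa [RCLike.ofReal_real_eq_id, Function.id_comp] at this
  set U : Matrix V V ℝ := (hA.eigenvectorUnitary : Matrix V V ℝ) with hUdef
  set D : Matrix V V ℝ := Matrix.diagonal hA.eigenvalues with hDdef
  induction k with
  | zero => simp [pow_zero, hU]
  | succ k ih =>
      calc A ^ (k + 1) = (U * D ^ k * star U) * (U * D * star U) := by
            rw [pow_succ, ih, ← hspec]
        _ = U * D ^ k * (star U * U) * D * star U := by noncomm_ring
        _ = U * (D ^ k * D) * star U := by rw [hU']; noncomm_ring
        _ = U * D ^ (k + 1) * star U := by rw [← pow_succ]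

lemma aux_trace_pow {A : Matrix V V ℝ} (hA : A.IsHermitian) (k : ℕ) :
    (A ^ k).trace = ∑ i, hA.eigenvalues i ^ k := by
  have hU' : star (hA.eigenvectorUnitary : Matrix V V ℝ) *
      (hA.eigenvectorUnitary : Matrix V V ℝ) = 1 :=
    Matrix.mem_unitaryGroup_iff'.mp (hA.eigenvectorUnitary).2
  rw [aux_pow_spectral hA k, Matrix.trace_mul_cycle, hU', Matrix.one_mul,
    Matrix.diagonal_pow, Matrix.trace_diagonal]
  simp [Pi.pow_apply]

/-- Quadratic-form decomposition through the eigenbasis. -/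
lemma aux_quadform {A : Matrix V V ℝ} (hA : A.IsHermitian) (x : V → ℝ) :
    ∃ y : V → ℝ, x ⬝ᵥ (A *ᵥ x) = ∑ i, hA.eigenvalues i * y i ^ 2 ∧
      x ⬝ᵥ x = ∑ i, y i ^ 2 := by
  set U : Matrix V V ℝ := (hA.eigenvectorUnitary : Matrix V V ℝ) with hUdef
  have hU : U * star U = 1 := Matrix.mem_unitaryGroup_iff.mp (hA.eigenvectorUnitary).2
  have hspec : A = U * Matrix.diagonal hA.eigenvalues * star U := by
    have := hA.spectral_theorem
    rwa [RCLike.ofReal_real_eq_id, Function.id_comp] at this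
  refine ⟨star U *ᵥ x, ?_, ?_⟩
  · set y : V → ℝ := star U *ᵥ x with hy
    have hvm : x ᵥ* U = y := by
      rw [hy, Matrix.star_eq_conjTranspose, Matrix.conjTranspose_eq_transpose_of_trivial,
        Matrix.mulVec_transpose]
    calc x ⬝ᵥ (A *ᵥ x)
        = x ⬝ᵥ ((U * Matrix.diagonal hA.eigenvalues * star U) *ᵥ x) := by
          conv_lhs => rw [hspec]
      _ = x ⬝ᵥ (U *ᵥ (Matrix.diagonal hA.eigenvalues *ᵥ y)) := by
          rw [← Matrix.mulVec_mulVec, ← Matrix.mulVec_mulVec, hy]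
      _ = (x ᵥ* U) ⬝ᵥ (Matrix.diagonal hA.eigenvalues *ᵥ y) := by
          rw [Matrix.dotProduct_mulVec]
      _ = ∑ i, hA.eigenvalues i * y i ^ 2 := by
          rw [hvm]
          simp [dotProduct, Matrix.mulVec_diagonal]
          exact Finset.sum_congr rfl fun i _ => by ring
  · set y : V → ℝ := star U *ᵥ x with hy
    have hvm : x ᵥ* U = y := by
      rw [hy, Matrix.star_eq_conjTranspose, Matrix.conjTranspose_eq_transpose_of_trivial,
        Matrix.mulVec_transpose]
    calc x ⬝ᵥ x = x ⬝ᵥ ((U * star U) *ᵥ x) := by rw [hU, Matrix.one_mulVec]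
      _ = x ⬝ᵥ (U *ᵥ y) := by rw [← Matrix.mulVec_mulVec, hy]
      _ = (x ᵥ* U) ⬝ᵥ y := by rw [Matrix.dotProduct_mulVec]
      _ = ∑ i, y i ^ 2 := by
          rw [hvm]
          simp [dotProduct, sq]

/-- Rayleigh-type bound: the quadratic form is at most `t * ‖x‖²` for `t` an upper bound
on the eigenvalues. -/
lemma aux_rayleigh {A : Matrix V V ℝ} (hA : A.IsHermitian) {t : ℝ}
    (ht : ∀ i, hA.eigenvalues i ≤ t) (x : V → ℝ) :
    x ⬝ᵥ (A *ᵥ x) ≤ t * (x ⬝ᵥ x) := by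
  obtain ⟨y, h1, h2⟩ := aux_quadform hA x
  rw [h1, h2, Finset.mul_sum]
  exact Finset.sum_le_sum fun i _ =>
    mul_le_mul_of_nonneg_right (ht i) (sq_nonneg _)

end Aux

theorem triangle_free_sqrt_s_plus_le_half_card
    {V : Type*} [Fintype V] [DecidableEq V] (G : SimpleGraph V)
    [DecidableRel G.Adj]
    (hA : (G.adjMatrix ℝ).IsHermitian)
    (htf : G.CliqueFree 3)
    (hedge : G.edgeFinset.Nonempty) :
    Real.sqrt (∑ i ∈ univ.filter (fun i => 0 < hA.eigenvalues i),
        (hA.eigenvalues i) ^ 2) ≤ (Fintype.card V : ℝ) / 2 := by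
  classical
  set A : Matrix V V ℝ := G.adjMatrix ℝ with hAdef
  set μ : V → ℝ := hA.eigenvalues with hμdef
  set n : ℝ := (Fintype.card V : ℝ) with hn
  set m : ℝ := (G.edgeFinset.card : ℝ) with hm
  -- there is a vertex
  obtain ⟨e, he⟩ := hedge
  have hVne : Nonempty V := by
    induction e with
    | _ a b => exact ⟨a⟩
  have hnpos : (0 : ℝ) < n := by
    rw [hn]
    exact_mod_cast Fintype.card_pos_iff.mpr hVne
  have hm1 : (1 : ℝ) ≤ m := by
    rw [hm]
    exact_mod_cast Finset.card_pos.mpr ⟨e, he⟩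
  -- trace of A^2 is 2m
  have h2m : ∑ i, μ i ^ 2 = 2 * m := by
    rw [← aux_trace_pow hA 2]
    rw [pow_two]
    have : (A * A).trace = ∑ i, ((G.degree i : ℝ)) := by
      rw [Matrix.trace]
      exact Finset.sum_congr rfl fun i _ => G.adjMatrix_mul_self_apply_self i
    rw [this, hm]
    rw [← Nat.cast_sum]
    rw [SimpleGraph.sum_degrees_eq_twice_card_edges]
    push_cast
    ring
  -- trace of A^3 is 0 (triangle-free)
  have h3 : ∑ i, μ i ^ 3 = 0 := by
    rw [← aux_trace_pow hA 3]
    have hdiag : ∀ i, (A ^ 3) i i = 0 := by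
      intro i
      have : A ^ 3 = A * (A * A) := by rw [pow_succ', pow_two]
      rw [this, SimpleGraph.adjMatrix_mul_apply]
      refine Finset.sum_eq_zero fun u hu => ?_
      rw [SimpleGraph.adjMatrix_mul_apply]
      refine Finset.sum_eq_zero fun w hw => ?_
      rw [SimpleGraph.mem_neighborFinset] at hu hw
      have hwi : ¬ G.Adj w i := by
        intro hadj
        exact htf {i, u, w} (SimpleGraph.is3Clique_triple_iff.mpr ⟨hu, hadj.symm, hw⟩)
      show G.adjMatrix ℝ w i = 0
      simp [hwi]
    rw [Matrix.trace]
    exact Finset.sum_eq_zero fun i _ => hdiag i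
  -- max eigenvalue
  obtain ⟨i₀, -, hmax⟩ := Finset.exists_max_image (univ : Finset V) μ ⟨Classical.arbitrary V, mem_univ _⟩
  set t : ℝ := μ i₀ with htdef
  have hmax' : ∀ j, μ j ≤ t := fun j => hmax j (mem_univ j)
  -- Rayleigh with all-ones vector: 2m ≤ t n
  have hRay : 2 * m ≤ t * n := by
    set ones : V → ℝ := fun _ => (1 : ℝ) with hones
    have h := aux_rayleigh hA hmax' ones
    have h1 : ones ⬝ᵥ (A *ᵥ ones) = 2 * m := by
      rw [hones]
      rw [SimpleGraph.dotProduct_mulVec_adjMatrix]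
      have : ∀ i : V, (∑ j : V, if G.Adj i j then (1:ℝ) * 1 else 0) = (G.degree i : ℝ) := by
        intro i
        rw [SimpleGraph.degree]
        simp [SimpleGraph.neighborFinset_eq_filter, Finset.sum_ite, mul_one]
      rw [Finset.sum_congr rfl fun i _ => this i, hm, ← Nat.cast_sum,
        SimpleGraph.sum_degrees_eq_twice_card_edges]
      push_cast
      ring
    have h2 : ones ⬝ᵥ ones = n := by
      rw [hones]
      simp [dotProduct, hn]
    rw [h1, h2] at h
    exact h
  have htpos : 0 < t := by
    nlinarith
  -- every eigenvalue is at least -t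
  have hneg : ∀ i, -t ≤ μ i := by
    intro i
    set v : V → ℝ := ⇑(hA.eigenvectorBasis i) with hv
    have hnorm : v ⬝ᵥ v = 1 := by
      have h1 : ‖hA.eigenvectorBasis i‖ = 1 := hA.eigenvectorBasis.orthonormal.1 i
      have h2 : (inner ℝ (hA.eigenvectorBasis i) (hA.eigenvectorBasis i) : ℝ) = 1 := by
        rw [real_inner_self_eq_norm_sq, h1]; norm_num
      rw [← h2, PiLp.inner_apply]
      simp [dotProduct, hv, sq]
    have heig : v ⬝ᵥ (A *ᵥ v) = μ i := by
      rw [hv, hA.mulVec_eigenvectorBasis]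
      rw [dotProduct_smul]
      have : ⇑(hA.eigenvectorBasis i) ⬝ᵥ ⇑(hA.eigenvectorBasis i) = 1 := hnorm
      rw [smul_eq_mul, this, mul_one]
    -- |v| version
    set w : V → ℝ := fun j => |v j| with hw
    have hww : w ⬝ᵥ w = 1 := by
      rw [← hnorm]
      simp [dotProduct, hw, abs_mul_abs_self]
    have hbound : -(v ⬝ᵥ (A *ᵥ v)) ≤ w ⬝ᵥ (A *ᵥ w) := by
      rw [SimpleGraph.dotProduct_mulVec_adjMatrix, SimpleGraph.dotProduct_mulVec_adjMatrix,
        ← Finset.sum_neg_distrib]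
      refine Finset.sum_le_sum fun a _ => ?_
      rw [← Finset.sum_neg_distrib]
      refine Finset.sum_le_sum fun b _ => ?_
      split
      · rw [hw]
        calc -(v a * v b) ≤ |v a * v b| := neg_le_abs _
          _ = |v a| * |v b| := abs_mul _ _
      · simp
    have hray2 : w ⬝ᵥ (A *ᵥ w) ≤ t := by
      have := aux_rayleigh hA hmax' w
      rwa [hww, mul_one] at this
    rw [heig] at hbound
    linarith
  -- split sums
  set Sp : ℝ := ∑ i ∈ univ.filter (fun i => 0 < μ i), μ i ^ 2 with hSp
  set Sm : ℝ := ∑ i ∈ univ.filter (fun i => ¬ 0 < μ i), μ i ^ 2 with hSm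
  have hsplit : Sp + Sm = 2 * m := by
    rw [hSp, hSm, Finset.sum_filter_add_sum_filter_not, h2m]
  have hsplit3 : (∑ i ∈ univ.filter (fun i => 0 < μ i), μ i ^ 3)
      + (∑ i ∈ univ.filter (fun i => ¬ 0 < μ i), μ i ^ 3) = 0 := by
    rw [Finset.sum_filter_add_sum_filter_not, h3]
  -- t^2 ≤ Sm
  have htSm : t ^ 2 ≤ Sm := by
    have hcube : t ^ 3 ≤ ∑ i ∈ univ.filter (fun i => 0 < μ i), μ i ^ 3 := by
      refine Finset.single_le_sum (f := fun i => μ i ^ 3) (fun i hi => ?_) ?_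
      · rw [Finset.mem_filter] at hi
        exact (pow_pos hi.2 3).le
      · rw [Finset.mem_filter]
        exact ⟨mem_univ _, htpos⟩
    have hcube2 : ∑ i ∈ univ.filter (fun i => 0 < μ i), μ i ^ 3 ≤ t * Sm := by
      have : ∑ i ∈ univ.filter (fun i => 0 < μ i), μ i ^ 3
          = - ∑ i ∈ univ.filter (fun i => ¬ 0 < μ i), μ i ^ 3 := by linarith
      rw [this, hSm, Finset.mul_sum, ← Finset.sum_neg_distrib]
      refine Finset.sum_le_sum fun i hi => ?_
      have h1 : -μ i ≤ t := by linarith [hneg i]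
      have : -μ i ^ 3 = (-μ i) * μ i ^ 2 := by ring
      rw [this]
      exact mul_le_mul_of_nonneg_right h1 (sq_nonneg _)
    have : t ^ 3 ≤ t * Sm := le_trans hcube hcube2
    nlinarith
  -- conclude Sp ≤ n^2/4
  have hfinal : Sp ≤ (n / 2) ^ 2 := by nlinarith [sq_nonneg (n / 2 - t), hRay, htSm, hsplit]
  calc Real.sqrt Sp ≤ Real.sqrt ((n / 2) ^ 2) := Real.sqrt_le_sqrt hfinal
    _ = n / 2 := Real.sqrt_sq (by positivity)
end

section
/- Motzkin–Straus inequality: for any graph G with clique number ω and any nonnegative vector (p₁,...,pₙ) with Σ pᵢ = 1, Σ_{i∼j, i<j} pᵢ pⱼ ≤ (ω − 1)/(2ω). -/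
open Finset

/-- The double-counted edge quadratic form. -/
noncomputable def mtzF {V : Type*} [Fintype V] (G : SimpleGraph V) [DecidableRel G.Adj]
    (p : V → ℝ) : ℝ :=
  ∑ a, ∑ b, (if G.Adj a b then p a * p b else 0)

section aux

variable {V : Type*} [Fintype V] [DecidableEq V] (G : SimpleGraph V) [DecidableRel G.Adj]

/-- Weight sum over the neighborhood of `x`. -/
noncomputable def mtzS (p : V → ℝ) (x : V) : ℝ := ∑ k, (if G.Adj x k then p k else 0)

lemma sum_two_support (f : V → ℝ) (d : V → ℝ) (i j : V) (hij : i ≠ j)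
    (hd : ∀ k, k ≠ i → k ≠ j → d k = 0) :
    ∑ k, f k * d k = f i * d i + f j * d j := by
  have h1 : ∑ k ∈ ({i, j} : Finset V), f k * d k = ∑ k, f k * d k := by
    refine Finset.sum_subset (Finset.subset_univ _) ?_
    intro k _ hk
    simp only [Finset.mem_insert, Finset.mem_singleton, not_or] at hk
    rw [hd k hk.1 hk.2, mul_zero]
  rw [← h1, Finset.sum_pair hij]

lemma shift_le (p : V → ℝ) (hp : ∀ k, 0 ≤ p k) (i j : V) (hij : i ≠ j)
    (hadj : ¬ G.Adj i j) (hS : mtzS G p i ≤ mtzS G p j) :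
    mtzF G p ≤ mtzF G (fun k => if k = i then 0 else if k = j then p i + p j else p k) := by
  set d : V → ℝ := fun k => if k = i then -p i else if k = j then p i else 0 with hd
  have hdo : ∀ k, k ≠ i → k ≠ j → d k = 0 := by
    intro k h1 h2; simp [hd, h1, h2]
  have di : d i = -p i := by simp [hd]
  have dj : d j = p i := by simp [hd, hij.symm]
  have hdmem : ∀ k, d k ≠ 0 → k = i ∨ k = j := by
    intro k hk
    by_contra h
    push_neg at h
    exact hk (hdo k h.1 h.2)
  have hq : (fun k => if k = i then 0 else if k = j then p i + p j else p k)
      = fun k => p k + d k := by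
    funext k
    by_cases h1 : k = i
    · subst h1; simp [hd]
    · by_cases h2 : k = j
      · subst h2; simp [hd, h1]; ring
      · simp [hd, h1, h2]
  rw [hq]
  have expand : mtzF G (fun k => p k + d k) =
      mtzF G p
      + (∑ a, ∑ b, (if G.Adj a b then p a * d b else 0))
      + (∑ a, ∑ b, (if G.Adj a b then d a * p b else 0))
      + (∑ a, ∑ b, (if G.Adj a b then d a * d b else 0)) := by
    unfold mtzF
    rw [← Finset.sum_add_distrib, ← Finset.sum_add_distrib, ← Finset.sum_add_distrib]
    refine Finset.sum_congr rfl fun a _ => ?_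
    rw [← Finset.sum_add_distrib, ← Finset.sum_add_distrib, ← Finset.sum_add_distrib]
    refine Finset.sum_congr rfl fun b _ => ?_
    split_ifs <;> ring
  have term1 : (∑ a, ∑ b, (if G.Adj a b then d a * p b else 0))
      = p i * (mtzS G p j - mtzS G p i) := by
    have e1 : ∀ a, (∑ b, (if G.Adj a b then d a * p b else 0)) = mtzS G p a * d a := by
      intro a
      rw [mtzS, Finset.sum_mul]
      exact Finset.sum_congr rfl fun b _ => by split_ifs <;> ring
    calc (∑ a, ∑ b, (if G.Adj a b then d a * p b else 0))
        = ∑ a, mtzS G p a * d a := Finset.sum_congr rfl fun a _ => e1 a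
      _ = mtzS G p i * d i + mtzS G p j * d j :=
          sum_two_support (fun a => mtzS G p a) d i j hij hdo
      _ = p i * (mtzS G p j - mtzS G p i) := by rw [di, dj]; ring
  have term2 : (∑ a, ∑ b, (if G.Adj a b then p a * d b else 0))
      = p i * (mtzS G p j - mtzS G p i) := by
    rw [Finset.sum_comm]
    have e1 : ∀ b, (∑ a, (if G.Adj a b then p a * d b else 0)) = mtzS G p b * d b := by
      intro b
      rw [mtzS, Finset.sum_mul]
      refine Finset.sum_congr rfl fun a _ => ?_
      by_cases h : G.Adj a b
      · rw [if_pos h, if_pos h.symm]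
      · rw [if_neg h, if_neg (fun h' => h h'.symm), zero_mul]
    calc (∑ b, ∑ a, (if G.Adj a b then p a * d b else 0))
        = ∑ b, mtzS G p b * d b := Finset.sum_congr rfl fun b _ => e1 b
      _ = mtzS G p i * d i + mtzS G p j * d j :=
          sum_two_support (fun a => mtzS G p a) d i j hij hdo
      _ = p i * (mtzS G p j - mtzS G p i) := by rw [di, dj]; ring
  have term3 : (∑ a, ∑ b, (if G.Adj a b then d a * d b else 0)) = 0 := by
    refine Finset.sum_eq_zero fun a _ => Finset.sum_eq_zero fun b _ => ?_
    by_cases hab : G.Adj a b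
    · rw [if_pos hab]
      by_cases ha : d a = 0
      · rw [ha, zero_mul]
      by_cases hb : d b = 0
      · rw [hb, mul_zero]
      exfalso
      rcases hdmem a ha with rfl | rfl <;> rcases hdmem b hb with rfl | rfl
      · exact G.irrefl hab
      · exact hadj hab
      · exact hadj (hab.symm)
      · exact G.irrefl hab
    · rw [if_neg hab]
  rw [expand, term1, term2, term3]
  have h1 : 0 ≤ p i * (mtzS G p j - mtzS G p i) :=
    mul_nonneg (hp i) (by linarith)
  linarith

lemma mtz_key : ∀ (n : ℕ) (p : V → ℝ), (univ.filter (fun k => p k ≠ 0)).card ≤ n →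
    (∀ k, 0 ≤ p k) → ∑ k, p k = 1 →
    mtzF G p ≤ 1 - 1 / (G.cliqueNum : ℝ) := by
  intro n
  induction n with
  | zero =>
    intro p hcard hp hsum
    exfalso
    have : ∀ k, p k = 0 := by
      intro k
      by_contra hk
      have : k ∈ univ.filter (fun k => p k ≠ 0) := by simp [hk]
      have := Finset.card_pos.mpr ⟨k, this⟩
      omega
    simp [this] at hsum
  | succ n ih =>
    intro p hcard hp hsum
    by_cases hcl : ∀ a b, p a ≠ 0 → p b ≠ 0 → a ≠ b → G.Adj a b
    · -- support is a clique
      set s := univ.filter (fun k => p k ≠ 0) with hs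
      have hsum_s : ∑ k ∈ s, p k = 1 := by
        rw [← hsum]
        refine Finset.sum_subset (Finset.subset_univ _) ?_
        intro k _ hk
        simp [hs] at hk
        exact hk
      have hclique : G.IsClique (↑s : Set V) := by
        intro a ha b hb hab
        simp [hs] at ha hb
        exact hcl a b ha hb hab
      have hcardω : s.card ≤ G.cliqueNum := hclique.card_le_cliqueNum
      have hspos : 0 < s.card := by
        rcases Finset.eq_empty_or_nonempty s with h | h
        · rw [h] at hsum_s; simp at hsum_s
        · exact Finset.card_pos.mpr h
      have hωpos : 0 < (G.cliqueNum : ℝ) := by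
        have : 0 < G.cliqueNum := lt_of_lt_of_le hspos hcardω
        exact_mod_cast this
      -- F p = 1 - ∑ p²
      have hF : mtzF G p = 1 - ∑ k, p k ^ 2 := by
        have e1 : ∀ a b : V, (if G.Adj a b then p a * p b else 0) =
            p a * p b - (if a = b then p a * p b else 0) := by
          intro a b
          by_cases hab : G.Adj a b
          · rw [if_pos hab, if_neg hab.ne, sub_zero]
          · by_cases heq : a = b
            · rw [if_neg hab, if_pos heq]; ring
            · rw [if_neg hab, if_neg heq, sub_zero]
              by_cases ha : p a = 0
              · rw [ha, zero_mul]
              by_cases hb : p b = 0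
              · rw [hb, mul_zero]
              exact absurd (hcl a b ha hb heq) hab
        unfold mtzF
        simp only [e1]
        rw [Finset.sum_congr rfl (fun a _ => Finset.sum_sub_distrib _ _),
          Finset.sum_sub_distrib]
        have e2 : ∑ a : V, ∑ b : V, p a * p b = 1 := by
          rw [← Finset.sum_mul_sum, hsum, one_mul]
        have e3 : ∑ a : V, ∑ b : V, (if a = b then p a * p b else 0) = ∑ k, p k ^ 2 := by
          refine Finset.sum_congr rfl fun a _ => ?_
          rw [Finset.sum_ite_eq univ a (fun b => p a * p b)]
          simp [sq]
        rw [e2, e3]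
      -- Cauchy-Schwarz
      have hCS : 1 ≤ (s.card : ℝ) * ∑ k, p k ^ 2 := by
        have h1 : (∑ k ∈ s, p k) ^ 2 ≤ (s.card : ℝ) * ∑ k ∈ s, p k ^ 2 :=
          sq_sum_le_card_mul_sum_sq (s := s) (f := p)
        rw [hsum_s, one_pow] at h1
        refine h1.trans (mul_le_mul_of_nonneg_left ?_ (by positivity))
        refine Finset.sum_le_sum_of_subset_of_nonneg (Finset.subset_univ _) ?_
        intro k _ _; positivity
      have hscardpos : 0 < (s.card : ℝ) := by exact_mod_cast hspos
      have h2 : 1 / (s.card : ℝ) ≤ ∑ k, p k ^ 2 := by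
        rw [div_le_iff₀ hscardpos]
        linarith [hCS]
      have h3 : 1 / (G.cliqueNum : ℝ) ≤ 1 / (s.card : ℝ) := by
        apply one_div_le_one_div_of_le hscardpos
        exact_mod_cast hcardω
      rw [hF]
      linarith
    · -- support is not a clique: shift mass
      push_neg at hcl
      obtain ⟨a, b, ha, hb, hab, hadj⟩ := hcl
      have hamem : a ∈ univ.filter (fun k => p k ≠ 0) := by simp [ha]
      have hbmem : b ∈ univ.filter (fun k => p k ≠ 0) := by simp [hb]
      -- generic step for (i, j) = (a, b) or (b, a)
      have step : ∀ i j : V, p i ≠ 0 → p j ≠ 0 → i ≠ j → ¬ G.Adj i j →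
          mtzS G p i ≤ mtzS G p j → mtzF G p ≤ 1 - 1 / (G.cliqueNum : ℝ) := by
        intro i j hi hj hij hnadj hSij
        set q : V → ℝ := fun k => if k = i then 0 else if k = j then p i + p j else p k
          with hqdef
        have hq0 : ∀ k, 0 ≤ q k := by
          intro k
          simp only [hqdef]
          split_ifs
          · exact le_refl 0
          · exact add_nonneg (hp i) (hp j)
          · exact hp k
        have hqsum : ∑ k, q k = 1 := by
          have hmem : ∀ k ∈ (univ : Finset V), k ∉ ({i, j} : Finset V) → q k = p k := by
            intro k _ hk
            simp only [Finset.mem_insert, Finset.mem_singleton, not_or] at hk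
            simp [hqdef, hk.1, hk.2]
          have e1 : ∑ k ∈ ({i, j} : Finset V), q k = ∑ k ∈ ({i, j} : Finset V), p k := by
            rw [Finset.sum_pair hij, Finset.sum_pair hij]
            simp [hqdef, hij.symm]
          calc ∑ k, q k
              = ∑ k ∈ (univ \ {i, j} : Finset V), q k + ∑ k ∈ ({i, j} : Finset V), q k := by
                rw [Finset.sum_sdiff (Finset.subset_univ _)]
            _ = ∑ k ∈ (univ \ {i, j} : Finset V), p k + ∑ k ∈ ({i, j} : Finset V), p k := by
                rw [e1]
                congr 1
                refine Finset.sum_congr rfl fun k hk => ?_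
                rw [Finset.mem_sdiff] at hk
                exact hmem k hk.1 hk.2
            _ = ∑ k, p k := Finset.sum_sdiff (Finset.subset_univ _)
            _ = 1 := hsum
        have hqsupp : (univ.filter (fun k => q k ≠ 0)).card ≤ n := by
          have hsub : univ.filter (fun k => q k ≠ 0) ⊆
              (univ.filter (fun k => p k ≠ 0)).erase i := by
            intro k hk
            simp only [Finset.mem_filter, Finset.mem_univ, true_and] at hk
            rw [Finset.mem_erase]
            constructor
            · intro hki; subst hki; simp [hqdef] at hk
            · simp only [Finset.mem_filter, Finset.mem_univ, true_and]
              by_cases hki : k = i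
              · subst hki; simp [hqdef] at hk
              by_cases hkj : k = j
              · subst hkj; exact hj
              · simpa [hqdef, hki, hkj] using hk
          have himem : i ∈ univ.filter (fun k => p k ≠ 0) := by simp [hi]
          calc (univ.filter (fun k => q k ≠ 0)).card
              ≤ ((univ.filter (fun k => p k ≠ 0)).erase i).card := Finset.card_le_card hsub
            _ = (univ.filter (fun k => p k ≠ 0)).card - 1 := Finset.card_erase_of_mem himem
            _ ≤ n := by omega
        calc mtzF G p ≤ mtzF G q := shift_le G p hp i j hij hnadj hSij
          _ ≤ 1 - 1 / (G.cliqueNum : ℝ) := ih q hqsupp hq0 hqsum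
      rcases le_total (mtzS G p a) (mtzS G p b) with h | h
      · exact step a b ha hb hab hadj h
      · exact step b a hb ha hab.symm (fun h' => hadj h'.symm) h

end aux

theorem motzkin_straus
    {V : Type*} [Fintype V] [DecidableEq V] [Nonempty V] (G : SimpleGraph V)
    [DecidableRel G.Adj]
    (p : V → ℝ) (hp : ∀ i, 0 ≤ p i) (hsum : ∑ i, p i = 1) :
    (∑ i, ∑ j ∈ univ.filter (fun j => G.Adj i j), p i * p j) / 2 ≤
      ((G.cliqueNum : ℝ) - 1) / (2 * (G.cliqueNum : ℝ)) := by
  have hF : (∑ i, ∑ j ∈ univ.filter (fun j => G.Adj i j), p i * p j) = mtzF G p := by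
    unfold mtzF
    refine Finset.sum_congr rfl fun i _ => ?_
    rw [Finset.sum_filter]
  have hkey := mtz_key G ((univ.filter (fun k => p k ≠ 0)).card) p le_rfl hp hsum
  have hω1 : 1 ≤ G.cliqueNum := by
    obtain ⟨v⟩ := ‹Nonempty V›
    have hclique : G.IsClique (↑({v} : Finset V) : Set V) := by
      simp [SimpleGraph.isClique_iff, Set.Pairwise]
    have := hclique.card_le_cliqueNum
    simpa using this
  have hωpos : 0 < (G.cliqueNum : ℝ) := by exact_mod_cast hω1
  rw [hF]
  have hne : (G.cliqueNum : ℝ) ≠ 0 := ne_of_gt hωpos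
  have heq : ((G.cliqueNum : ℝ) - 1) / (2 * (G.cliqueNum : ℝ))
      = (1 - 1 / (G.cliqueNum : ℝ)) / 2 := by
    rw [div_eq_div_iff (by positivity) (by norm_num)]
    field_simp
  rw [heq]
  linarith
end
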